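/- Let N be a positive integer and w ∈ C̄ a word with π(w) = [[a,b],[c,d]]. (i) If d is a unit of ℤ/Nℤ, then there exists a unique α ∈ ℤ/Nℤ such that αw ∈ Ā, and there exists a unique β ∈ ℤ/Nℤ such that wβ ∈ Ā. (ii) If d is not a unit of ℤ/Nℤ, then for all α, β ∈ ℤ/Nℤ, both αw and wβ lie in C̄. -/

import Mathlib

/-- The monoid homomorphism π sending a word α₁…α_l over ℤ/Nℤ to the matrix product
[[0,1],[−1,α₁]] ⋯ [[0,1],[−1,α_l]]. -/
def piWordN (N : ℕ) (w : List (ZMod N)) : Matrix (Fin 2) (Fin 2) (ZMod N) :=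
  (w.map fun α => !![0, 1; -1, α]).prod

/-- Ā : the words whose image under π has (2,2)-entry equal to 0. -/
def Abar (N : ℕ) : Set (List (ZMod N)) :=
  {w | piWordN N w 1 1 = 0}

lemma piWordN_det (N : ℕ) (w : List (ZMod N)) : (piWordN N w).det = 1 := by
  induction w with
  | nil => simp [piWordN]
  | cons x t ih =>
    have : piWordN N (x :: t) = !![0, 1; -1, x] * piWordN N t := by
      simp [piWordN]
    rw [this, Matrix.det_mul, ih]
    simp [Matrix.det_fin_two_of]

lemma piWordN_cons (N : ℕ) (x : ZMod N) (w : List (ZMod N)) :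
    piWordN N (x :: w) = !![0, 1; -1, x] * piWordN N w := by
  simp [piWordN]

lemma piWordN_append (N : ℕ) (w : List (ZMod N)) (x : ZMod N) :
    piWordN N (w ++ [x]) = piWordN N w * !![0, 1; -1, x] := by
  simp [piWordN]

theorem stmt11 (N : ℕ) (hN : 0 < N) (w : List (ZMod N)) (hw : w ∉ Abar N)
    (a b c d : ZMod N) (hπ : piWordN N w = !![a, b; c, d]) :
    (IsUnit d → (∃! α : ZMod N, α :: w ∈ Abar N) ∧ (∃! β : ZMod N, w ++ [β] ∈ Abar N)) ∧
    (¬ IsUnit d → ∀ α β : ZMod N, α :: w ∉ Abar N ∧ w ++ [β] ∉ Abar N) := by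
  have hdet : a * d - b * c = 1 := by
    have := piWordN_det N w
    rw [hπ, Matrix.det_fin_two_of] at this
    exact this
  have hcons : ∀ α : ZMod N, (α :: w ∈ Abar N ↔ α * d - b = 0) := by
    intro α
    rw [Abar, Set.mem_setOf_eq, piWordN_cons, hπ]
    constructor <;> intro h
    · have := h
      rw [Matrix.mul_apply, Fin.sum_univ_two] at this
      simp [Matrix.of_apply] at this
      linear_combination this
    · rw [Matrix.mul_apply, Fin.sum_univ_two]
      simp [Matrix.of_apply]
      linear_combination h
  have happ : ∀ β : ZMod N, (w ++ [β] ∈ Abar N ↔ c + d * β = 0) := by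
    intro β
    rw [Abar, Set.mem_setOf_eq, piWordN_append, hπ]
    rw [Matrix.mul_apply, Fin.sum_univ_two]
    constructor <;> intro h
    · simp [Matrix.of_apply] at h
      linear_combination h
    · simp [Matrix.of_apply]
      linear_combination h
  constructor
  · intro hd
    obtain ⟨u, hu⟩ := hd
    constructor
    · refine ⟨b * (↑u⁻¹ : (ZMod N)ˣ), ?_, ?_⟩
      · beta_reduce
        rw [hcons]
        have : ((↑u⁻¹ : (ZMod N)ˣ) : ZMod N) * d = 1 := by
          rw [← hu]; exact u.inv_mul
        calc b * (↑u⁻¹ : (ZMod N)ˣ) * d - b = b * (((↑u⁻¹ : (ZMod N)ˣ) : ZMod N) * d) - b := by ring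
          _ = 0 := by rw [this]; ring
      · intro y hy
        rw [hcons] at hy
        have h1 : y * d = b := by linear_combination hy
        have : ((↑u⁻¹ : (ZMod N)ˣ) : ZMod N) * d = 1 := by rw [← hu]; exact u.inv_mul
        calc y = y * (((↑u⁻¹ : (ZMod N)ˣ) : ZMod N) * d) := by rw [this]; ring
          _ = (y * d) * (↑u⁻¹ : (ZMod N)ˣ) := by ring
          _ = b * (↑u⁻¹ : (ZMod N)ˣ) := by rw [h1]
    · refine ⟨-c * (↑u⁻¹ : (ZMod N)ˣ), ?_, ?_⟩
      · beta_reduce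
        rw [happ]
        have : d * ((↑u⁻¹ : (ZMod N)ˣ) : ZMod N) = 1 := by
          rw [← hu]; exact u.mul_inv
        calc c + d * (-c * (↑u⁻¹ : (ZMod N)ˣ)) = c - c * (d * ((↑u⁻¹ : (ZMod N)ˣ) : ZMod N)) := by ring
          _ = 0 := by rw [this]; ring
      · intro y hy
        rw [happ] at hy
        have h1 : d * y = -c := by linear_combination hy
        have : ((↑u⁻¹ : (ZMod N)ˣ) : ZMod N) * d = 1 := by rw [← hu]; exact u.inv_mul
        calc y = (((↑u⁻¹ : (ZMod N)ˣ) : ZMod N) * d) * y := by rw [this]; ring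
          _ = ((↑u⁻¹ : (ZMod N)ˣ) : ZMod N) * (d * y) := by ring
          _ = -c * (↑u⁻¹ : (ZMod N)ˣ) := by rw [h1]; ring
  · intro hd α β
    constructor
    · intro h
      rw [hcons] at h
      apply hd
      have : d * (a - α * c) = 1 := by linear_combination hdet - c * h
      exact IsUnit.of_mul_eq_one _ this
    · intro h
      rw [happ] at h
      apply hd
      have : d * (a + b * β) = 1 := by linear_combination hdet + b * h
      exact IsUnit.of_mul_eq_one _ this
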